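/- Let $H$ be a Hilbert space, $(S_t)$ a $C_0$-semigroup on $H$ with each $S_t$ ($t>0$) compact. Then the operator $G : L^2([0,1]; H) \to H$ defined by $G f = \int_0^1 S_{1-s} f(s)\, ds$ is a compact operator. Consequently, if $F : H \to H$ is bounded, the set $\{\int_0^1 S_{1-s} g(s)\, ds : g \text{ measurable}, \sup_s |g(s)| \le C_F\}$ is relatively compact in $H$. -/

import Mathlib

open Real MeasureTheory Filter Topology

open scoped RealInnerProductSpace

section Aux

variable {H : Type*} [NormedAddCommGroup H] [InnerProductSpace ℝ H] [CompleteSpace H]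

/-- A compact operator maps bounded weakly-null sequences to sequences whose adjoint
norms tend to zero: `‖T† uⱼ‖ → 0`. -/
lemma aux_adj_tendsto (T : H →L[ℝ] H) (hT : IsCompactOperator T) (u : ℕ → H) (Cu : ℝ)
    (hub : ∀ j, ‖u j‖ ≤ Cu)
    (hw : ∀ z : H, Tendsto (fun j => ⟪u j, z⟫) atTop (𝓝 0)) :
    Tendsto (fun j => ‖ContinuousLinearMap.adjoint T (u j)‖) atTop (𝓝 0) := by
  have hCu : 0 ≤ Cu := le_trans (norm_nonneg _) (hub 0)
  obtain ⟨K, hK, hKmem⟩ := hT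
  obtain ⟨r, hr, hball⟩ := Metric.mem_nhds_iff.1 hKmem
  rw [Metric.tendsto_nhds]
  intro ε hε
  set ε' := r * ε / (4 * (Cu + 1)) with hε'def
  have hε' : 0 < ε' := by positivity
  obtain ⟨F, hFfin, hFcov⟩ := (Metric.totallyBounded_iff.1 hK.totallyBounded) ε' hε'
  have hev : ∀ᶠ j in atTop, ∀ y ∈ F, |⟪u j, y⟫| < r * ε / 4 := by
    rw [eventually_all_finite hFfin]
    intro y _
    have h0 : Tendsto (fun j => |⟪u j, y⟫|) atTop (𝓝 0) := by
      simpa using (hw y).abs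
    have h0' := h0.eventually_lt_const (show (0:ℝ) < r * ε / 4 by positivity)
    exact h0'
  filter_upwards [hev] with j hj
  rw [Real.dist_0_eq_abs, abs_of_nonneg (norm_nonneg _)]
  by_cases hv : ContinuousLinearMap.adjoint T (u j) = 0
  · rw [hv, norm_zero]; exact hε
  set v := ContinuousLinearMap.adjoint T (u j) with hvdef
  have hvn : 0 < ‖v‖ := norm_pos_iff.2 hv
  set x := (r / 2) • (‖v‖⁻¹ • v) with hxdef
  have hx : ‖x‖ = r / 2 := by
    rw [hxdef, norm_smul, norm_smul, norm_inv, norm_norm, inv_mul_cancel₀ (ne_of_gt hvn)]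
    simp [abs_of_pos, hr.le, abs_of_nonneg]
  have hxball : x ∈ Metric.ball (0 : H) r := by
    rw [mem_ball_zero_iff, hx]; linarith
  have hTx : T x ∈ K := hball hxball
  obtain ⟨y, hyF, hTxy⟩ : ∃ y ∈ F, T x ∈ Metric.ball y ε' := by
    have := hFcov hTx
    simpa using this
  have key : ⟪u j, T x⟫ = r / 2 * ‖v‖ := by
    rw [← ContinuousLinearMap.adjoint_inner_left, ← hvdef, hxdef, inner_smul_right,
      inner_smul_right, real_inner_self_eq_norm_mul_norm]
    field_simp
  have hbound : ⟪u j, T x⟫ ≤ |⟪u j, y⟫| + Cu * ε' := by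
    have hsplit : ⟪u j, T x⟫ = ⟪u j, y⟫ + ⟪u j, T x - y⟫ := by
      rw [← inner_add_right]; congr 1; abel
    rw [hsplit]
    have h1 : ⟪u j, T x - y⟫ ≤ ‖u j‖ * ‖T x - y‖ := real_inner_le_norm _ _
    have h2 : ‖T x - y‖ ≤ ε' := by
      rw [← dist_eq_norm]; exact (Metric.mem_ball.1 hTxy).le
    have h3 : ‖u j‖ * ‖T x - y‖ ≤ Cu * ε' :=
      mul_le_mul (hub j) h2 (norm_nonneg _) hCu
    linarith [le_abs_self (⟪u j, y⟫)]
  have hCuε' : Cu * ε' ≤ r * ε / 4 := by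
    rw [hε'def, ← mul_div_assoc, div_le_div_iff₀ (by positivity) (by norm_num : (0:ℝ) < 4)]
    nlinarith [mul_pos hr hε]
  have hj' := hj y hyF
  have : r / 2 * ‖v‖ < r * ε / 2 := by
    rw [← key] at *
    linarith
  nlinarith
 
/-- `s ↦ ‖(S (1-s))† u‖` is measurable (it is lower semicontinuous). -/
lemma aux_meas_h (S : ℝ → (H →L[ℝ] H)) (hSsg : Continuous fun p : ℝ × H => S p.1 p.2) (u : H) :
    Measurable fun s : ℝ => ‖ContinuousLinearMap.adjoint (S (1 - s)) u‖ := by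
  have lsc : LowerSemicontinuous fun s : ℝ => ‖ContinuousLinearMap.adjoint (S (1 - s)) u‖ := by
    intro s₀ c hc
    have hc' : c < ‖ContinuousLinearMap.adjoint (S (1 - s₀)) u‖ := hc
    rcases lt_or_ge c 0 with h0 | h0
    · exact Eventually.of_forall fun s => lt_of_lt_of_le h0 (norm_nonneg _)
    · set v := ContinuousLinearMap.adjoint (S (1 - s₀)) u with hv
      have hvne : v ≠ 0 := by
        intro h
        rw [h, norm_zero] at hc'
        exact absurd hc' (not_lt.2 h0)
      set x₀ := (‖v‖⁻¹ : ℝ) • v with hx₀def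
      have hx₀ : ‖x₀‖ = 1 := norm_smul_inv_norm hvne
      have hF : Continuous fun s : ℝ => ⟪u, S (1 - s) x₀⟫ :=
        Continuous.inner continuous_const
          (hSsg.comp (((continuous_const.sub continuous_id).prodMk continuous_const)))
      have hF₀ : c < ⟪u, S (1 - s₀) x₀⟫ := by
        rw [← ContinuousLinearMap.adjoint_inner_left, ← hv, hx₀def, inner_smul_right,
          real_inner_self_eq_norm_mul_norm]
        calc c < ‖v‖ := hc'
        _ = ‖v‖⁻¹ * (‖v‖ * ‖v‖) := by
            field_simp
      have hopen : IsOpen {s : ℝ | c < ⟪u, S (1 - s) x₀⟫} := isOpen_lt continuous_const hF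
      have hev : ∀ᶠ s in 𝓝 s₀, c < ⟪u, S (1 - s) x₀⟫ :=
        eventually_of_mem (hopen.mem_nhds hF₀) fun s hs => hs
      refine hev.mono fun s hs => lt_of_lt_of_le hs ?_
      rw [← ContinuousLinearMap.adjoint_inner_left]
      calc ⟪ContinuousLinearMap.adjoint (S (1 - s)) u, x₀⟫
          ≤ ‖ContinuousLinearMap.adjoint (S (1 - s)) u‖ * ‖x₀‖ := real_inner_le_norm _ _
      _ = ‖ContinuousLinearMap.adjoint (S (1 - s)) u‖ := by rw [hx₀, mul_one]
  exact lsc.measurable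

/-- Weak sequential compactness of bounded sequences in a Hilbert space. -/
lemma aux_weak_seq (y : ℕ → H) (C : ℝ) (hb : ∀ m, ‖y m‖ ≤ C) :
    ∃ (y₀ : H) (ψ : ℕ → ℕ), StrictMono ψ ∧
      ∀ z : H, Tendsto (fun j => ⟪y (ψ j), z⟫) atTop (𝓝 ⟪y₀, z⟫) := by
  have hC : 0 ≤ C := le_trans (norm_nonneg _) (hb 0)
  set Msub : Submodule ℝ H := (Submodule.span ℝ (Set.range y)).topologicalClosure with hMsub
  have hyM : ∀ m, y m ∈ Msub := fun m =>
    Submodule.le_topologicalClosure _ (Submodule.subset_span (Set.mem_range_self m))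
  have hsep : TopologicalSpace.IsSeparable (Msub : Set H) := by
    have h1 : TopologicalSpace.IsSeparable (Set.range y) := (Set.countable_range y).isSeparable
    have h2 := h1.span (R := ℝ)
    have h3 := h2.closure
    rwa [hMsub, Submodule.topologicalClosure_coe]
  obtain ⟨c, hc_count, hc_sub⟩ := hsep
  obtain ⟨e, he⟩ := (hc_count.insert 0).exists_eq_range (Set.insert_nonempty 0 c)
  have hMe : (Msub : Set H) ⊆ closure (Set.range e) := by
    rw [← he]
    exact hc_sub.trans (closure_mono (Set.subset_insert _ _))
  -- product compactness diagonal argument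
  set P : Set (ℕ → ℝ) := Set.univ.pi fun k => Set.Icc (-(C * ‖e k‖)) (C * ‖e k‖) with hPdef
  have hP : IsCompact P := isCompact_univ_pi fun k => isCompact_Icc
  set a : ℕ → ℕ → ℝ := fun m k => ⟪y m, e k⟫ with hadef
  have ha : ∀ m, a m ∈ P := by
    intro m
    rw [hPdef, Set.mem_univ_pi]
    intro k
    have h1 : |⟪y m, e k⟫| ≤ ‖y m‖ * ‖e k‖ := abs_real_inner_le_norm _ _
    have h2 : ‖y m‖ * ‖e k‖ ≤ C * ‖e k‖ :=
      mul_le_mul_of_nonneg_right (hb m) (norm_nonneg _)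
    have := abs_le.1 (h1.trans h2)
    exact ⟨this.1, this.2⟩
  obtain ⟨L, _, ψ, hψ, hconv⟩ := hP.tendsto_subseq ha
  have hcoord : ∀ k, Tendsto (fun j => ⟪y (ψ j), e k⟫) atTop (𝓝 (L k)) := by
    intro k
    have := ((continuous_apply k).tendsto L).comp hconv
    exact this
  -- Cauchy on the closure of the range of `e`
  have hcau : ∀ z : H, z ∈ closure (Set.range e) → CauchySeq fun j => ⟪y (ψ j), z⟫ := by
    intro z hz
    rw [Metric.cauchySeq_iff]
    intro ε hε
    have hδ : 0 < ε / (4 * (C + 1)) := by positivity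
    obtain ⟨w, hw, hwz⟩ := Metric.mem_closure_iff.1 hz _ hδ
    obtain ⟨k, rfl⟩ := hw
    have hck : CauchySeq fun j => ⟪y (ψ j), e k⟫ := (hcoord k).cauchySeq
    obtain ⟨N, hN⟩ := Metric.cauchySeq_iff.1 hck (ε / 2) (by positivity)
    refine ⟨N, fun m hm n hn => ?_⟩
    have hkey : ⟪y (ψ m), z⟫ - ⟪y (ψ n), z⟫ =
        (⟪y (ψ m), e k⟫ - ⟪y (ψ n), e k⟫) + ⟪y (ψ m) - y (ψ n), z - e k⟫ := by
      simp only [inner_sub_left, inner_sub_right]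
      ring
    rw [Real.dist_eq, hkey]
    have h1 : |⟪y (ψ m), e k⟫ - ⟪y (ψ n), e k⟫| < ε / 2 := by
      have := hN m hm n hn
      rwa [Real.dist_eq] at this
    have h2 : |⟪y (ψ m) - y (ψ n), z - e k⟫| ≤ 2 * C * (ε / (4 * (C + 1))) := by
      refine (abs_real_inner_le_norm _ _).trans ?_
      have hA : ‖y (ψ m) - y (ψ n)‖ ≤ 2 * C :=
        (norm_sub_le _ _).trans (by linarith [hb (ψ m), hb (ψ n)])
      have hB : ‖z - e k‖ ≤ ε / (4 * (C + 1)) := by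
        rw [← dist_eq_norm]; exact hwz.le
      exact mul_le_mul hA hB (norm_nonneg _) (by positivity)
    have h3 : 2 * C * (ε / (4 * (C + 1))) < ε / 2 := by
      rw [← mul_div_assoc, div_lt_div_iff₀ (by positivity) (by norm_num : (0:ℝ) < 2)]
      nlinarith [hε]
    calc |(⟪y (ψ m), e k⟫ - ⟪y (ψ n), e k⟫) + ⟪y (ψ m) - y (ψ n), z - e k⟫|
        ≤ |⟪y (ψ m), e k⟫ - ⟪y (ψ n), e k⟫| + |⟪y (ψ m) - y (ψ n), z - e k⟫| :=
          abs_add_le _ _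
    _ < ε := by linarith
  -- all of H
  haveI : CompleteSpace Msub := (Submodule.isClosed_topologicalClosure _).completeSpace_coe
  have hZ : ∀ z : H, ∃ l, Tendsto (fun j => ⟪y (ψ j), z⟫) atTop (𝓝 l) := by
    intro z
    have hz : z ∈ Msub ⊔ Msubᗮ := by
      rw [Submodule.sup_orthogonal_of_hasOrthogonalProjection]
      trivial
    obtain ⟨p, hp, q, hq, rfl⟩ := Submodule.mem_sup.1 hz
    obtain ⟨l, hl⟩ := cauchySeq_tendsto_of_complete (hcau p (hMe hp))
    refine ⟨l, ?_⟩
    have hq0 : ∀ j, ⟪y (ψ j), q⟫ = 0 := fun j =>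
      (Submodule.mem_orthogonal Msub q).1 hq (y (ψ j)) (hyM _)
    have : (fun j => ⟪y (ψ j), p + q⟫) = fun j => ⟪y (ψ j), p⟫ := by
      funext j
      rw [inner_add_right, hq0, add_zero]
    rw [this]
    exact hl
  choose Lf hLf using hZ
  have hadd : ∀ z w, Lf (z + w) = Lf z + Lf w := by
    intro z w
    refine tendsto_nhds_unique (hLf (z + w)) ?_
    have := (hLf z).add (hLf w)
    simpa [inner_add_right] using this
  have hsmul : ∀ (r : ℝ) (z : H), Lf (r • z) = r * Lf z := by
    intro r z
    refine tendsto_nhds_unique (hLf (r • z)) ?_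
    have := (hLf z).const_mul r
    simpa [inner_smul_right] using this
  have hbound : ∀ z, |Lf z| ≤ C * ‖z‖ := by
    intro z
    refine le_of_tendsto (hLf z).abs (Eventually.of_forall fun j => ?_)
    exact (abs_real_inner_le_norm _ _).trans
      (mul_le_mul_of_nonneg_right (hb _) (norm_nonneg _))
  set Lmap : H →ₗ[ℝ] ℝ :=
    { toFun := Lf
      map_add' := hadd
      map_smul' := by intro r z; simpa using hsmul r z } with hLmap
  set Lcont : H →L[ℝ] ℝ := LinearMap.mkContinuous Lmap C
    (fun z => by simpa [Real.norm_eq_abs, hLmap] using hbound z) with hLcont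
  set y₀ := (InnerProductSpace.toDual ℝ H).symm Lcont with hy₀
  refine ⟨y₀, ψ, hψ, fun z => ?_⟩
  have h1 : ⟪y₀, z⟫ = Lcont z := InnerProductSpace.toDual_symm_apply
  rw [h1]
  exact hLf z

end Aux

section Aux2

variable {H : Type*} [NormedAddCommGroup H] [InnerProductSpace ℝ H] [CompleteSpace H]

/-- DCT: the integrals `∫ ‖(S (1-s))† uⱼ‖^n ds → 0` for a bounded weakly-null sequence. -/
lemma aux_int_tendsto (S : ℝ → (H →L[ℝ] H)) (hSsg : Continuous fun p : ℝ × H => S p.1 p.2)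
    (hScomp : ∀ t > (0:ℝ), IsCompactOperator (S t))
    (M : ℝ) (hM : ∀ t ∈ Set.Icc (0:ℝ) 1, ‖S t‖ ≤ M)
    (u : ℕ → H) (Cu : ℝ) (hub : ∀ j, ‖u j‖ ≤ Cu)
    (hw : ∀ z : H, Tendsto (fun j => ⟪u j, z⟫) atTop (𝓝 0)) (n : ℕ) (hn : n ≠ 0) :
    Tendsto (fun j => ∫ s in Set.Icc (0:ℝ) 1,
      ‖ContinuousLinearMap.adjoint (S (1 - s)) (u j)‖ ^ n) atTop (𝓝 0) := by
  set μ := volume.restrict (Set.Icc (0:ℝ) 1) with hμ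
  haveI : IsFiniteMeasure μ := ⟨by
    rw [hμ, Measure.restrict_apply_univ]
    exact measure_Icc_lt_top⟩
  have hCu : 0 ≤ Cu := le_trans (norm_nonneg _) (hub 0)
  have hM0 : 0 ≤ M := le_trans (norm_nonneg _) (hM 0 ⟨le_refl 0, zero_le_one⟩)
  have hadjnorm : ∀ (s : ℝ), s ∈ Set.Icc (0:ℝ) 1 →
      ∀ j, ‖ContinuousLinearMap.adjoint (S (1 - s)) (u j)‖ ≤ M * Cu := by
    intro s hs j
    have h1 : ‖ContinuousLinearMap.adjoint (S (1 - s))‖ = ‖S (1 - s)‖ :=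
      (ContinuousLinearMap.adjoint : (H →L[ℝ] H) ≃ₗᵢ⋆[ℝ] (H →L[ℝ] H)).norm_map _
    calc ‖ContinuousLinearMap.adjoint (S (1 - s)) (u j)‖
        ≤ ‖ContinuousLinearMap.adjoint (S (1 - s))‖ * ‖u j‖ :=
          ContinuousLinearMap.le_opNorm _ _
    _ ≤ M * Cu := by
        rw [h1]
        exact mul_le_mul (hM _ ⟨by linarith [hs.2], by linarith [hs.1]⟩) (hub j)
          (norm_nonneg _) hM0
  have hmeas : ∀ j, AEStronglyMeasurable
      (fun s => ‖ContinuousLinearMap.adjoint (S (1 - s)) (u j)‖ ^ n) μ := fun j =>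
    ((aux_meas_h S hSsg (u j)).pow_const n).aestronglyMeasurable
  have hboundint : Integrable (fun _ : ℝ => (M * Cu) ^ n) μ := integrable_const _
  have h1ae : ∀ᵐ s ∂(volume.restrict (Set.Icc (0:ℝ) 1)), s ≠ (1:ℝ) := by
    rw [ae_iff]
    have heq : {s : ℝ | ¬s ≠ 1} = {(1:ℝ)} := by
      ext s; simp [Set.mem_singleton_iff]
    rw [heq]
    have : μ {(1:ℝ)} ≤ volume {(1:ℝ)} := by
      rw [hμ, Measure.restrict_apply (measurableSet_singleton _)]
      exact measure_mono Set.inter_subset_left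
    simpa [Real.volume_singleton] using le_antisymm (by simpa [Real.volume_singleton] using this)
      (zero_le _)
  have h_bound : ∀ j, ∀ᵐ s ∂(volume.restrict (Set.Icc (0:ℝ) 1)),
      ‖‖ContinuousLinearMap.adjoint (S (1 - s)) (u j)‖ ^ n‖ ≤ (M * Cu) ^ n := by
    intro j
    filter_upwards [ae_restrict_mem measurableSet_Icc] with s hs
    rw [norm_pow, norm_norm]
    exact pow_le_pow_left₀ (norm_nonneg _) (hadjnorm s hs j) n
  have h_lim : ∀ᵐ s ∂(volume.restrict (Set.Icc (0:ℝ) 1)), Tendsto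
      (fun j => ‖ContinuousLinearMap.adjoint (S (1 - s)) (u j)‖ ^ n) atTop (𝓝 0) := by
    filter_upwards [ae_restrict_mem measurableSet_Icc, h1ae] with s hs hs1
    have hpos : 0 < 1 - s := by
      rcases lt_or_eq_of_le hs.2 with h | h
      · linarith
      · exact absurd h hs1
    have := aux_adj_tendsto (S (1 - s)) (hScomp _ hpos) u Cu hub hw
    have hpow := this.pow n
    simpa [zero_pow hn] using hpow
  have := tendsto_integral_of_dominated_convergence (F := fun j s =>
      ‖ContinuousLinearMap.adjoint (S (1 - s)) (u j)‖ ^ n) (f := fun _ => (0:ℝ))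
      (μ := μ) (fun _ => (M * Cu) ^ n) hmeas hboundint h_bound h_lim
  simpa using this

variable [MeasurableSpace H] [BorelSpace H]

/-- Key inner product bound for `Lp` elements. -/
lemma aux_inner_bound1 (S : ℝ → (H →L[ℝ] H)) (hSsg : Continuous fun p : ℝ × H => S p.1 p.2)
    (M : ℝ) (hM : ∀ t ∈ Set.Icc (0:ℝ) 1, ‖S t‖ ≤ M)
    (f : Lp H 2 (volume.restrict (Set.Icc (0:ℝ) 1))) (u : H) :
    |⟪∫ s in Set.Icc (0:ℝ) 1, S (1 - s) (f s), u⟫| ≤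
      ‖f‖ * Real.sqrt (∫ s in Set.Icc (0:ℝ) 1,
        ‖ContinuousLinearMap.adjoint (S (1 - s)) u‖ ^ 2) := by
  haveI : IsFiniteMeasure (volume.restrict (Set.Icc (0:ℝ) 1)) := ⟨by
    rw [Measure.restrict_apply_univ]; exact measure_Icc_lt_top⟩
  have hM0 : 0 ≤ M := le_trans (norm_nonneg _) (hM 0 ⟨le_refl 0, zero_le_one⟩)
  set h : ℝ → ℝ := fun s => ‖ContinuousLinearMap.adjoint (S (1 - s)) u‖ with hhdef
  have hhmeas : Measurable h := aux_meas_h S hSsg u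
  have hhbdd : ∀ᵐ s ∂(volume.restrict (Set.Icc (0:ℝ) 1)), ‖h s‖ ≤ M * ‖u‖ := by
    filter_upwards [ae_restrict_mem measurableSet_Icc] with s hs
    rw [hhdef, norm_norm]
    have h1 : ‖ContinuousLinearMap.adjoint (S (1 - s))‖ = ‖S (1 - s)‖ :=
      (ContinuousLinearMap.adjoint : (H →L[ℝ] H) ≃ₗᵢ⋆[ℝ] (H →L[ℝ] H)).norm_map _
    calc ‖ContinuousLinearMap.adjoint (S (1 - s)) u‖
        ≤ ‖ContinuousLinearMap.adjoint (S (1 - s))‖ * ‖u‖ := ContinuousLinearMap.le_opNorm _ _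
    _ ≤ M * ‖u‖ := by
        rw [h1]
        exact mul_le_mul_of_nonneg_right (hM _ ⟨by linarith [hs.2], by linarith [hs.1]⟩)
          (norm_nonneg _)
  have hh2 : MemLp h 2 (volume.restrict (Set.Icc (0:ℝ) 1)) := MemLp.of_bound hhmeas.aestronglyMeasurable _ hhbdd
  -- integrand measurability and integrability
  have hk : Continuous fun p : ℝ × H => S (1 - p.1) p.2 :=
    hSsg.comp ((continuous_const.sub continuous_fst).prodMk continuous_snd)
  have hfm : AEStronglyMeasurable (fun s => S (1 - s) (f s)) (volume.restrict (Set.Icc (0:ℝ) 1)) :=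
    hk.comp_aestronglyMeasurable (aestronglyMeasurable_id.prodMk (Lp.aestronglyMeasurable f))
  have hf1 : Integrable (fun s => ‖f s‖) (volume.restrict (Set.Icc (0:ℝ) 1)) :=
    (memLp_one_iff_integrable.1 ((Lp.memLp f).mono_exponent (by norm_num))).norm
  have hφint : Integrable (fun s => S (1 - s) (f s)) (volume.restrict (Set.Icc (0:ℝ) 1)) := by
    refine Integrable.mono' (hf1.const_mul M) hfm ?_
    filter_upwards [ae_restrict_mem measurableSet_Icc] with s hs
    calc ‖S (1 - s) (f s)‖ ≤ ‖S (1 - s)‖ * ‖f s‖ := ContinuousLinearMap.le_opNorm _ _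
    _ ≤ M * ‖f s‖ := mul_le_mul_of_nonneg_right
        (hM _ ⟨by linarith [hs.2], by linarith [hs.1]⟩) (norm_nonneg _)
  -- Lp elements for Hölder
  set u' : Lp ℝ 2 (volume.restrict (Set.Icc (0:ℝ) 1)) := ((Lp.memLp f).norm).toLp (fun s => ‖f s‖) with hu'
  set v' : Lp ℝ 2 (volume.restrict (Set.Icc (0:ℝ) 1)) := hh2.toLp h with hv'
  have hu'ae : ∀ᵐ s ∂(volume.restrict (Set.Icc (0:ℝ) 1)), u' s = ‖f s‖ := MemLp.coeFn_toLp _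
  have hv'ae : ∀ᵐ s ∂(volume.restrict (Set.Icc (0:ℝ) 1)), v' s = h s := MemLp.coeFn_toLp _
  have hprod_int : Integrable (fun s => ‖f s‖ * h s) (volume.restrict (Set.Icc (0:ℝ) 1)) := by
    have := L2.integrable_inner (𝕜 := ℝ) u' v'
    refine this.congr ?_
    filter_upwards [hu'ae, hv'ae] with s h1 h2
    rw [h1, h2]
    simp [RCLike.inner_apply, mul_comm]
  -- Step 1 : |⟪∫ φ, u⟫| ≤ ∫ ‖f s‖ * h s
  have hstep1 : |⟪∫ s in Set.Icc (0:ℝ) 1, S (1 - s) (f s), u⟫| ≤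
      ∫ s in Set.Icc (0:ℝ) 1, ‖f s‖ * h s := by
    have heq : ⟪∫ s in Set.Icc (0:ℝ) 1, S (1 - s) (f s), u⟫ =
        ∫ s in Set.Icc (0:ℝ) 1, ⟪u, S (1 - s) (f s)⟫ := by
      rw [real_inner_comm]
      exact (integral_inner hφint u).symm
    rw [heq, ← Real.norm_eq_abs]
    refine norm_integral_le_of_norm_le hprod_int ?_
    filter_upwards with s
    rw [Real.norm_eq_abs, ← ContinuousLinearMap.adjoint_inner_left]
    calc |⟪ContinuousLinearMap.adjoint (S (1 - s)) u, f s⟫|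
        ≤ ‖ContinuousLinearMap.adjoint (S (1 - s)) u‖ * ‖f s‖ := abs_real_inner_le_norm _ _
    _ = ‖f s‖ * h s := by rw [hhdef, mul_comm]
  -- Step 2 : Hölder
  have hstep2 : ∫ s in Set.Icc (0:ℝ) 1, ‖f s‖ * h s ≤ ‖u'‖ * ‖v'‖ := by
    have : ∫ s in Set.Icc (0:ℝ) 1, ‖f s‖ * h s = ⟪u', v'⟫ := by
      rw [L2.inner_def]
      refine integral_congr_ae ?_
      filter_upwards [hu'ae, hv'ae] with s h1 h2
      rw [h1, h2]
      simp [RCLike.inner_apply, mul_comm]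
    rw [this]
    exact real_inner_le_norm _ _
  have hu'norm : ‖u'‖ = ‖f‖ := by
    rw [hu', Lp.norm_toLp, Lp.norm_def]
    congr 1
    exact eLpNorm_norm _
  have hv'norm : ‖v'‖ = Real.sqrt (∫ s in Set.Icc (0:ℝ) 1, h s ^ 2) := by
    have h1 : ⟪v', v'⟫ = ∫ s in Set.Icc (0:ℝ) 1, h s ^ 2 := by
      rw [L2.inner_def]
      refine integral_congr_ae ?_
      filter_upwards [hv'ae] with s h2
      rw [h2]
      simp [RCLike.inner_apply, sq]
    have h2 : ⟪v', v'⟫ = ‖v'‖ ^ 2 := real_inner_self_eq_norm_sq _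
    rw [← h1, h2, Real.sqrt_sq (norm_nonneg _)]
  refine hstep1.trans (hstep2.trans ?_)
  rw [hu'norm, hv'norm]

/-- Key inner product bound for pointwise-bounded functions. -/
lemma aux_inner_bound2 (S : ℝ → (H →L[ℝ] H)) (hSsg : Continuous fun p : ℝ × H => S p.1 p.2)
    (M : ℝ) (hM : ∀ t ∈ Set.Icc (0:ℝ) 1, ‖S t‖ ≤ M)
    (g : ℝ → H) (R : ℝ) (hR : 0 ≤ R) (hg : ∀ s, ‖g s‖ ≤ R) (u : H) :
    |⟪∫ s in Set.Icc (0:ℝ) 1, S (1 - s) (g s), u⟫| ≤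
      R * ∫ s in Set.Icc (0:ℝ) 1, ‖ContinuousLinearMap.adjoint (S (1 - s)) u‖ := by
  haveI : IsFiniteMeasure (volume.restrict (Set.Icc (0:ℝ) 1)) := ⟨by
    rw [Measure.restrict_apply_univ]; exact measure_Icc_lt_top⟩
  have hM0 : 0 ≤ M := le_trans (norm_nonneg _) (hM 0 ⟨le_refl 0, zero_le_one⟩)
  set h : ℝ → ℝ := fun s => ‖ContinuousLinearMap.adjoint (S (1 - s)) u‖ with hhdef
  have hhmeas : Measurable h := aux_meas_h S hSsg u
  have hhbdd : ∀ᵐ s ∂(volume.restrict (Set.Icc (0:ℝ) 1)), ‖h s‖ ≤ M * ‖u‖ := by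
    filter_upwards [ae_restrict_mem measurableSet_Icc] with s hs
    rw [hhdef, norm_norm]
    have h1 : ‖ContinuousLinearMap.adjoint (S (1 - s))‖ = ‖S (1 - s)‖ :=
      (ContinuousLinearMap.adjoint : (H →L[ℝ] H) ≃ₗᵢ⋆[ℝ] (H →L[ℝ] H)).norm_map _
    calc ‖ContinuousLinearMap.adjoint (S (1 - s)) u‖
        ≤ ‖ContinuousLinearMap.adjoint (S (1 - s))‖ * ‖u‖ := ContinuousLinearMap.le_opNorm _ _
    _ ≤ M * ‖u‖ := by
        rw [h1]
        exact mul_le_mul_of_nonneg_right (hM _ ⟨by linarith [hs.2], by linarith [hs.1]⟩)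
          (norm_nonneg _)
  have hh1 : Integrable h (volume.restrict (Set.Icc (0:ℝ) 1)) := memLp_one_iff_integrable.1
    (MemLp.of_bound hhmeas.aestronglyMeasurable _ hhbdd)
  by_cases hint : Integrable (fun s => S (1 - s) (g s)) (volume.restrict (Set.Icc (0:ℝ) 1))
  · have heq : ⟪∫ s in Set.Icc (0:ℝ) 1, S (1 - s) (g s), u⟫ =
        ∫ s in Set.Icc (0:ℝ) 1, ⟪u, S (1 - s) (g s)⟫ := by
      rw [real_inner_comm]
      exact (integral_inner hint u).symm
    rw [heq, ← Real.norm_eq_abs, ← integral_const_mul]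
    refine norm_integral_le_of_norm_le (hh1.const_mul R) ?_
    filter_upwards with s
    rw [Real.norm_eq_abs, ← ContinuousLinearMap.adjoint_inner_left]
    calc |⟪ContinuousLinearMap.adjoint (S (1 - s)) u, g s⟫|
        ≤ ‖ContinuousLinearMap.adjoint (S (1 - s)) u‖ * ‖g s‖ := abs_real_inner_le_norm _ _
    _ ≤ R * h s := by
        rw [hhdef, mul_comm]
        exact mul_le_mul_of_nonneg_right (hg s) (norm_nonneg _)
  · rw [integral_undef hint]
    simp only [inner_zero_left, abs_zero]
    exact mul_nonneg hR (integral_nonneg fun s => norm_nonneg _)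

end Aux2

/-- If each `S_t` (`t > 0`) is compact then
`G f = ∫₀¹ S_{1-s} f(s) ds` is a compact operator `L²([0,1];H) → H`, and the set of
such integrals over measurable `g` bounded by `C_F` is relatively compact. -/
theorem stmt_9 (H : Type*) [NormedAddCommGroup H] [InnerProductSpace ℝ H]
    [CompleteSpace H] [MeasurableSpace H] [BorelSpace H]
    (S : ℝ → (H →L[ℝ] H)) (hSsg : Continuous fun p : ℝ × H => S p.1 p.2)
    (hScomp : ∀ t > (0:ℝ), IsCompactOperator (S t))
    (G : Lp H 2 (volume.restrict (Set.Icc (0:ℝ) 1)) →L[ℝ] H)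
    (hG : ∀ f : Lp H 2 (volume.restrict (Set.Icc (0:ℝ) 1)),
      G f = ∫ s in Set.Icc (0:ℝ) 1, S (1 - s) (f s)) (CF : ℝ) :
    IsCompactOperator G ∧
    IsCompact (closure {y : H | ∃ g : ℝ → H, Measurable g ∧
      (∀ s, ‖g s‖ ≤ CF) ∧ y = ∫ s in Set.Icc (0:ℝ) 1, S (1 - s) (g s)}) := by
  -- uniform bound on ‖S t‖ over t ∈ [0,1]
  obtain ⟨M, hM0, hM⟩ : ∃ M, 0 ≤ M ∧ ∀ t ∈ Set.Icc (0:ℝ) 1, ‖S t‖ ≤ M := by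
    have hb : ∀ x : H, ∃ C, ∀ i : Set.Icc (0:ℝ) 1, ‖S i x‖ ≤ C := by
      intro x
      have hcont : ContinuousOn (fun t : ℝ => ‖S t x‖) (Set.Icc (0:ℝ) 1) :=
        ((hSsg.comp (continuous_id.prodMk continuous_const)).norm).continuousOn
      obtain ⟨C, hC⟩ := (isCompact_Icc.image_of_continuousOn hcont).bddAbove
      exact ⟨C, fun i => hC (Set.mem_image_of_mem _ i.2)⟩
    obtain ⟨C', hC'⟩ := banach_steinhaus (g := fun i : Set.Icc (0:ℝ) 1 => S i) hb
    exact ⟨max C' 0, le_max_right _ _, fun t ht => (hC' ⟨t, ht⟩).trans (le_max_left _ _)⟩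
  have hμfin : IsFiniteMeasure (volume.restrict (Set.Icc (0:ℝ) 1)) := ⟨by
    rw [Measure.restrict_apply_univ]; exact measure_Icc_lt_top⟩
  constructor
  · -- compactness of G
    refine ⟨closure (G '' Metric.closedBall 0 1), ?_, ?_⟩
    · rw [isCompact_iff_isSeqCompact]
      intro x hx
      have happrox : ∀ m : ℕ, ∃ f : Lp H 2 (volume.restrict (Set.Icc (0:ℝ) 1)),
          ‖f‖ ≤ 1 ∧ dist (x m) (G f) < 1 / (m + 1) := by
        intro m
        obtain ⟨w, hw, hd⟩ := Metric.mem_closure_iff.1 (hx m) (1 / (m + 1)) (by positivity)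
        obtain ⟨f, hf, rfl⟩ := hw
        exact ⟨f, mem_closedBall_zero_iff.1 hf, hd⟩
      choose f hf hdist using happrox
      set y : ℕ → H := fun m => G (f m) with hy
      have hyb : ∀ m, ‖y m‖ ≤ ‖G‖ := by
        intro m
        calc ‖y m‖ ≤ ‖G‖ * ‖f m‖ := G.le_opNorm _
        _ ≤ ‖G‖ * 1 := mul_le_mul_of_nonneg_left (hf m) (norm_nonneg G)
        _ = ‖G‖ := mul_one _
      obtain ⟨y₀, ψ, hψ, hlim⟩ := aux_weak_seq y ‖G‖ hyb
      set u : ℕ → H := fun j => y (ψ j) - y₀ with hu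
      have hu_null : ∀ z : H, Tendsto (fun j => ⟪u j, z⟫) atTop (𝓝 0) := by
        intro z
        have := (hlim z).sub (tendsto_const_nhds (x := ⟪y₀, z⟫))
        simpa [hu, inner_sub_left] using this
      have hub : ∀ j, ‖u j‖ ≤ ‖G‖ + ‖y₀‖ := fun j =>
        (norm_sub_le _ _).trans (add_le_add (hyb _) le_rfl)
      have hsq : ∀ j, ‖u j‖ ^ 2 ≤ |⟪y (ψ j), u j⟫| + |⟪y₀, u j⟫| := by
        intro j
        have h1 : (‖u j‖ : ℝ) ^ 2 = ⟪u j, u j⟫ := (real_inner_self_eq_norm_sq _).symm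
        have h2 : ⟪u j, u j⟫ = ⟪y (ψ j), u j⟫ - ⟪y₀, u j⟫ := by
          rw [hu]; exact inner_sub_left _ _ _
        rw [h1, h2]
        have := le_abs_self (⟪y (ψ j), u j⟫)
        have := neg_abs_le (⟪y₀, u j⟫)
        linarith
      have hA : Tendsto (fun j => |⟪y (ψ j), u j⟫|) atTop (𝓝 0) := by
        have hint := aux_int_tendsto S hSsg hScomp M hM u (‖G‖ + ‖y₀‖) hub hu_null 2
          two_ne_zero
        have hbnd : ∀ j, |⟪y (ψ j), u j⟫| ≤
            Real.sqrt (∫ s in Set.Icc (0:ℝ) 1,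
              ‖ContinuousLinearMap.adjoint (S (1 - s)) (u j)‖ ^ 2) := by
          intro j
          have h1 := aux_inner_bound1 S hSsg M hM (f (ψ j)) (u j)
          rw [← hG] at h1
          calc |⟪y (ψ j), u j⟫| = |⟪G (f (ψ j)), u j⟫| := by rw [hy]
          _ ≤ ‖f (ψ j)‖ * Real.sqrt (∫ s in Set.Icc (0:ℝ) 1,
              ‖ContinuousLinearMap.adjoint (S (1 - s)) (u j)‖ ^ 2) := h1
          _ ≤ 1 * Real.sqrt (∫ s in Set.Icc (0:ℝ) 1,
              ‖ContinuousLinearMap.adjoint (S (1 - s)) (u j)‖ ^ 2) :=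
            mul_le_mul_of_nonneg_right (hf _) (Real.sqrt_nonneg _)
          _ = _ := one_mul _
        have hsq0 : Tendsto (fun j => Real.sqrt (∫ s in Set.Icc (0:ℝ) 1,
            ‖ContinuousLinearMap.adjoint (S (1 - s)) (u j)‖ ^ 2)) atTop (𝓝 0) := by
          have := hint.sqrt
          simpa [Real.sqrt_zero] using this
        exact squeeze_zero (fun j => abs_nonneg _) hbnd hsq0
      have hB : Tendsto (fun j => |⟪y₀, u j⟫|) atTop (𝓝 0) := by
        have := (hu_null y₀).abs
        simp only [abs_zero] at this
        refine this.congr fun j => ?_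
        rw [real_inner_comm]
      have husq : Tendsto (fun j => ‖u j‖ ^ 2) atTop (𝓝 0) := by
        refine squeeze_zero (fun j => sq_nonneg _) hsq ?_
        simpa using hA.add hB
      have hun : Tendsto (fun j => ‖u j‖) atTop (𝓝 0) := by
        have heq : (fun j => ‖u j‖) = fun j => Real.sqrt (‖u j‖ ^ 2) := by
          funext j; rw [Real.sqrt_sq (norm_nonneg _)]
        rw [heq]
        simpa [Real.sqrt_zero] using husq.sqrt
      have hyψ : Tendsto (fun j => y (ψ j)) atTop (𝓝 y₀) := by
        rw [tendsto_iff_norm_sub_tendsto_zero]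
        exact hun
      refine ⟨y₀, ?_, ψ, hψ, ?_⟩
      · exact isClosed_closure.mem_of_tendsto hyψ (Eventually.of_forall fun j =>
          subset_closure ⟨f (ψ j), mem_closedBall_zero_iff.2 (hf _), rfl⟩)
      · rw [tendsto_iff_dist_tendsto_zero]
        have hd1 : Tendsto (fun j => dist (x (ψ j)) (y (ψ j))) atTop (𝓝 0) := by
          refine squeeze_zero (fun j => dist_nonneg) (fun j => (hdist (ψ j)).le.trans ?_)
            tendsto_one_div_add_atTop_nhds_zero_nat
          have hψj : (j : ℝ) + 1 ≤ (ψ j : ℝ) + 1 := by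
            have h5 : j ≤ ψ j := hψ.le_apply
            have h5' : (j : ℝ) ≤ (ψ j : ℝ) := by exact_mod_cast h5
            linarith
          exact one_div_le_one_div_of_le (by positivity) hψj
        have hd2 : Tendsto (fun j => dist (y (ψ j)) y₀) atTop (𝓝 0) :=
          tendsto_iff_dist_tendsto_zero.1 hyψ
        refine squeeze_zero (fun j => dist_nonneg) (fun j => dist_triangle _ (y (ψ j)) _) ?_
        simpa using hd1.add hd2
    · have hsub : Metric.closedBall (0 : Lp H 2 (volume.restrict (Set.Icc (0:ℝ) 1))) 1 ⊆
          ⇑G ⁻¹' closure (G '' Metric.closedBall 0 1) := fun f hf =>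
        subset_closure (Set.mem_image_of_mem _ hf)
      exact Filter.mem_of_superset (Metric.closedBall_mem_nhds 0 one_pos) hsub
  · -- relative compactness of the set of integrals
    set Y : Set H := {y : H | ∃ g : ℝ → H, Measurable g ∧
      (∀ s, ‖g s‖ ≤ CF) ∧ y = ∫ s in Set.Icc (0:ℝ) 1, S (1 - s) (g s)} with hY
    rcases Set.eq_empty_or_nonempty Y with hYe | hYne
    · rw [hYe]
      simp
    · obtain ⟨ystar, gstar, _, hgstar, _⟩ := hYne
      have hCF : 0 ≤ CF := (norm_nonneg (gstar 0)).trans (hgstar 0)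
      rw [isCompact_iff_isSeqCompact]
      intro x hx
      have happrox : ∀ m : ℕ, ∃ g : ℝ → H, Measurable g ∧ (∀ s, ‖g s‖ ≤ CF) ∧
          dist (x m) (∫ s in Set.Icc (0:ℝ) 1, S (1 - s) (g s)) < 1 / (m + 1) := by
        intro m
        obtain ⟨w, hw, hd⟩ := Metric.mem_closure_iff.1 (hx m) (1 / (m + 1)) (by positivity)
        obtain ⟨g, hgm, hgb, rfl⟩ := hw
        exact ⟨g, hgm, hgb, hd⟩
      choose g hgm hgb hdist using happrox
      set y : ℕ → H := fun m => ∫ s in Set.Icc (0:ℝ) 1, S (1 - s) (g m s) with hy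
      have hμuniv : (volume.restrict (Set.Icc (0:ℝ) 1)) Set.univ = 1 := by
        rw [Measure.restrict_apply_univ, Real.volume_Icc]
        norm_num
      have hyb : ∀ m, ‖y m‖ ≤ M * CF := by
        intro m
        by_cases hint : Integrable (fun s => S (1 - s) (g m s))
            (volume.restrict (Set.Icc (0:ℝ) 1))
        · have h1 : ‖y m‖ ≤ ∫ _ in Set.Icc (0:ℝ) 1, (M * CF) := by
            refine norm_integral_le_of_norm_le (integrable_const _) ?_
            filter_upwards [ae_restrict_mem measurableSet_Icc] with s hs
            calc ‖S (1 - s) (g m s)‖ ≤ ‖S (1 - s)‖ * ‖g m s‖ :=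
              ContinuousLinearMap.le_opNorm _ _
            _ ≤ M * CF := mul_le_mul (hM _ ⟨by linarith [hs.2], by linarith [hs.1]⟩)
                (hgb m s) (norm_nonneg _) hM0
          rw [setIntegral_const, Real.volume_real_Icc] at h1
          simpa using h1
        · rw [hy]
          simp only
          rw [integral_undef hint, norm_zero]
          positivity
      obtain ⟨y₀, ψ, hψ, hlim⟩ := aux_weak_seq y (M * CF) hyb
      set u : ℕ → H := fun j => y (ψ j) - y₀ with hu
      have hu_null : ∀ z : H, Tendsto (fun j => ⟪u j, z⟫) atTop (𝓝 0) := by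
        intro z
        have := (hlim z).sub (tendsto_const_nhds (x := ⟪y₀, z⟫))
        simpa [hu, inner_sub_left] using this
      have hub : ∀ j, ‖u j‖ ≤ M * CF + ‖y₀‖ := fun j =>
        (norm_sub_le _ _).trans (add_le_add (hyb _) le_rfl)
      have hsq : ∀ j, ‖u j‖ ^ 2 ≤ |⟪y (ψ j), u j⟫| + |⟪y₀, u j⟫| := by
        intro j
        have h1 : (‖u j‖ : ℝ) ^ 2 = ⟪u j, u j⟫ := (real_inner_self_eq_norm_sq _).symm
        have h2 : ⟪u j, u j⟫ = ⟪y (ψ j), u j⟫ - ⟪y₀, u j⟫ := by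
          rw [hu]; exact inner_sub_left _ _ _
        rw [h1, h2]
        have := le_abs_self (⟪y (ψ j), u j⟫)
        have := neg_abs_le (⟪y₀, u j⟫)
        linarith
      have hA : Tendsto (fun j => |⟪y (ψ j), u j⟫|) atTop (𝓝 0) := by
        have hint := aux_int_tendsto S hSsg hScomp M hM u (M * CF + ‖y₀‖) hub hu_null 1
          one_ne_zero
        have hbnd : ∀ j, |⟪y (ψ j), u j⟫| ≤
            CF * ∫ s in Set.Icc (0:ℝ) 1,
              ‖ContinuousLinearMap.adjoint (S (1 - s)) (u j)‖ := by
          intro j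
          exact aux_inner_bound2 S hSsg M hM (g (ψ j)) CF hCF (hgb (ψ j)) (u j)
        have hsq0 : Tendsto (fun j => CF * ∫ s in Set.Icc (0:ℝ) 1,
            ‖ContinuousLinearMap.adjoint (S (1 - s)) (u j)‖) atTop (𝓝 0) := by
          have h2 := hint.const_mul CF
          simp only [pow_one] at h2
          simpa using h2
        exact squeeze_zero (fun j => abs_nonneg _) hbnd hsq0
      have hB : Tendsto (fun j => |⟪y₀, u j⟫|) atTop (𝓝 0) := by
        have := (hu_null y₀).abs
        simp only [abs_zero] at this
        refine this.congr fun j => ?_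
        rw [real_inner_comm]
      have husq : Tendsto (fun j => ‖u j‖ ^ 2) atTop (𝓝 0) := by
        refine squeeze_zero (fun j => sq_nonneg _) hsq ?_
        simpa using hA.add hB
      have hun : Tendsto (fun j => ‖u j‖) atTop (𝓝 0) := by
        have heq : (fun j => ‖u j‖) = fun j => Real.sqrt (‖u j‖ ^ 2) := by
          funext j; rw [Real.sqrt_sq (norm_nonneg _)]
        rw [heq]
        simpa [Real.sqrt_zero] using husq.sqrt
      have hyψ : Tendsto (fun j => y (ψ j)) atTop (𝓝 y₀) := by
        rw [tendsto_iff_norm_sub_tendsto_zero]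
        exact hun
      refine ⟨y₀, ?_, ψ, hψ, ?_⟩
      · exact isClosed_closure.mem_of_tendsto hyψ (Eventually.of_forall fun j =>
          subset_closure ⟨g (ψ j), hgm _, hgb _, rfl⟩)
      · rw [tendsto_iff_dist_tendsto_zero]
        have hd1 : Tendsto (fun j => dist (x (ψ j)) (y (ψ j))) atTop (𝓝 0) := by
          refine squeeze_zero (fun j => dist_nonneg) (fun j => (hdist (ψ j)).le.trans ?_)
            tendsto_one_div_add_atTop_nhds_zero_nat
          have hψj : (j : ℝ) + 1 ≤ (ψ j : ℝ) + 1 := by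
            have h5 : j ≤ ψ j := hψ.le_apply
            have h5' : (j : ℝ) ≤ (ψ j : ℝ) := by exact_mod_cast h5
            linarith
          exact one_div_le_one_div_of_le (by positivity) hψj
        have hd2 : Tendsto (fun j => dist (y (ψ j)) y₀) atTop (𝓝 0) :=
          tendsto_iff_dist_tendsto_zero.1 hyψ
        refine squeeze_zero (fun j => dist_nonneg) (fun j => dist_triangle _ (y (ψ j)) _) ?_
        simpa using hd1.add hd2
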